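/- Assume n ≥ 2, c_1 ≥ 0, c_3 ∈ ℝ, ζ ∈ ℝ and ω = 0, and for 1 ≤ i ≤ n define r_i : ℝ^m → ℝ by r_i(x) = (n/2) Σ_{l ∈ L_i} ⟨b_l, x⟩² + (c_1/2)‖x‖² − c_3 n x_1 if i = 1, and the same expression without the linear term if 2 ≤ i ≤ n. Let 0 ≤ k < m, let x ∈ F_k, let γ > 0, and let 1 ≤ i ≤ n. If i ≡ k+1 (mod n), then ∇r_i(x) ∈ F_{k+1} and the unique minimizer over ℝ^m of u ↦ r_i(u) + (1/(2γ))‖x − u‖² lies in F_{k+1}; if i ≢ k+1 (mod n), then ∇r_i(x) ∈ F_k and this unique minimizer lies in F_k. -/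

import Mathlib

open scoped RealInnerProductSpace BigOperators

/-- `F_k = span{e_1, …, e_k} ⊆ ℝ^m` (so `F_0 = {0}`). -/
def Fspan (m k : ℕ) : Submodule ℝ (EuclideanSpace ℝ (Fin m)) :=
  Submodule.span ℝ {v | ∃ j : Fin m, (j : ℕ) < k ∧ v = EuclideanSpace.single j 1}

/-- The submodule of vectors whose coordinates `≥ k` vanish. -/
def Zsub (m k : ℕ) : Submodule ℝ (EuclideanSpace ℝ (Fin m)) where
  carrier := {x | ∀ j : Fin m, k ≤ (j : ℕ) → x j = 0}
  add_mem' := by intro a b ha hb j hj; show a j + b j = 0; rw [ha j hj, hb j hj]; ring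
  zero_mem' := by intro j hj; rfl
  smul_mem' := by intro c a ha j hj; show c * a j = 0; rw [ha j hj]; ring

theorem Fspan_eq_Zsub (m k : ℕ) : Fspan m k = Zsub m k := by
  apply le_antisymm
  · rw [Fspan, Submodule.span_le]
    rintro v ⟨j, hj, rfl⟩ j' hj'
    have : j' ≠ j := by rintro rfl; omega
    simp [EuclideanSpace.single_apply, this]
  · intro x hx
    have : x = ∑ j ∈ Finset.univ.filter (fun j : Fin m => (j:ℕ) < k), x j • EuclideanSpace.single j 1 := by
      ext j'
      rw [WithLp.ofLp_sum, Finset.sum_apply]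
      by_cases h : (j' : ℕ) < k
      · rw [Finset.sum_eq_single j']
        · simp [EuclideanSpace.single_apply]
        · intro c hc hne
          simp [EuclideanSpace.single_apply, hne.symm]
        · intro hc; simp [h] at hc
      · rw [hx j' (by omega), Finset.sum_eq_zero]
        intro c hc
        simp only [Finset.mem_filter] at hc
        have : j' ≠ c := by rintro rfl; omega
        simp [EuclideanSpace.single_apply, this]
    rw [this]
    apply Submodule.sum_mem
    intro c hc
    simp only [Finset.mem_filter] at hc
    exact Submodule.smul_mem _ _ (Submodule.subset_span ⟨c, hc.2, rfl⟩)

theorem Zsub_le (m k k' : ℕ) (h : k ≤ k') : Zsub m k ≤ Zsub m k' := by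
  intro x hx j hj
  exact hx j (le_trans h hj)

theorem single_mem_Zsub (m K : ℕ) (j : Fin m) (h : (j:ℕ) < K) :
    EuclideanSpace.single j (1:ℝ) ∈ Zsub m K := by
  intro j' hj'
  have : j' ≠ j := by intro h'; subst h'; omega
  simp [EuclideanSpace.single_apply, this]

theorem inner_single_left' (m : ℕ) (j : Fin m) (u : EuclideanSpace ℝ (Fin m)) :
    ⟪EuclideanSpace.single j (1:ℝ), u⟫ = u j := by
  rw [EuclideanSpace.inner_single_left]
  simp

theorem bterm_mem (m : ℕ) (hm : 2 ≤ m) (ζ : ℝ) (b : ℕ → EuclideanSpace ℝ (Fin m))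
    (hb0 : b 0 = 0)
    (hbl : ∀ (l : ℕ) (_h1 : 1 ≤ l) (_h2 : l ≤ m - 1),
      b l = EuclideanSpace.single (⟨l - 1, by omega⟩ : Fin m) 1
            - EuclideanSpace.single (⟨l, by omega⟩ : Fin m) 1)
    (hbm : b m = ζ • EuclideanSpace.single (⟨m - 1, by omega⟩ : Fin m) 1)
    (K T l : ℕ) (hK : K ≤ m) (hl : l ≤ m) (hKT : K ≤ T) (hlK : l = K → K < T)
    (u : EuclideanSpace ℝ (Fin m)) (hu : u ∈ Zsub m K) :
    ⟪b l, u⟫ • b l ∈ Zsub m T := by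
  rcases Nat.eq_zero_or_pos l with rfl | hl1
  · rw [hb0]; simp [(Zsub m T).zero_mem]
  by_cases hlm : l ≤ m - 1
  · rw [hbl l hl1 hlm]
    by_cases hcase : l ≤ K
    · have hlT : l < T := by
        rcases Nat.lt_or_ge l K with h | h
        · omega
        · have : l = K := by omega
          have := hlK this; omega
      refine Submodule.smul_mem _ _ (Submodule.sub_mem _ ?_ ?_)
      · exact single_mem_Zsub m T _ (show l - 1 < T by omega)
      · exact single_mem_Zsub m T _ (show l < T by omega)
    · have hcoef : ⟪EuclideanSpace.single (⟨l - 1, by omega⟩ : Fin m) (1:ℝ)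
          - EuclideanSpace.single (⟨l, by omega⟩ : Fin m) 1, u⟫ = 0 := by
        rw [inner_sub_left, inner_single_left', inner_single_left',
          hu _ (by simp; omega), hu _ (by simp; omega)]
        ring
      rw [hcoef, zero_smul]
      exact (Zsub m T).zero_mem
  · have hlm' : l = m := by omega
    rw [hlm', hbm]
    by_cases hKm : K = m
    · intro j hj
      have := j.isLt
      have hT := hlK (by omega)
      omega
    · have hcoef : ⟪ζ • EuclideanSpace.single (⟨m - 1, by omega⟩ : Fin m) (1:ℝ), u⟫ = 0 := by
        rw [real_inner_smul_left, inner_single_left', hu _ (by simp; omega)]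
        ring
      rw [hcoef, zero_smul]
      exact (Zsub m T).zero_mem

section Quad

variable {E : Type*} [NormedAddCommGroup E] [InnerProductSpace ℝ E]

theorem quad_expand (a c e : ℝ) (S : Finset ℕ) (v : ℕ → E) (d x₀ : E) (u w : E) :
    a * (∑ l ∈ S, ⟪v l, w⟫ ^ 2) + c * ‖w‖ ^ 2 - ⟪d, w⟫ + e * ‖x₀ - w‖ ^ 2
    = (a * (∑ l ∈ S, ⟪v l, u⟫ ^ 2) + c * ‖u‖ ^ 2 - ⟪d, u⟫ + e * ‖x₀ - u‖ ^ 2)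
      + ⟪(2 * a) • (∑ l ∈ S, ⟪v l, u⟫ • v l) + (2 * c) • u - d + (2 * e) • (u - x₀), w - u⟫
      + (a * (∑ l ∈ S, ⟪v l, w - u⟫ ^ 2) + (c + e) * ‖w - u‖ ^ 2) := by
  have hsum : ∀ l ∈ S, ⟪v l, w⟫ ^ 2
      = ⟪v l, u⟫ ^ 2 + 2 * (⟪v l, u⟫ * ⟪v l, w - u⟫) + ⟪v l, w - u⟫ ^ 2 := by
    intro l _
    rw [inner_sub_right]
    ring
  rw [Finset.sum_congr rfl hsum]
  rw [Finset.sum_add_distrib, Finset.sum_add_distrib, ← Finset.mul_sum]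
  have hG : ⟪(2 * a) • (∑ l ∈ S, ⟪v l, u⟫ • v l) + (2 * c) • u - d + (2 * e) • (u - x₀), w - u⟫
      = 2 * a * (∑ l ∈ S, ⟪v l, u⟫ * ⟪v l, w - u⟫) + 2 * c * ⟪u, w - u⟫ - ⟪d, w - u⟫
        + 2 * e * ⟪u - x₀, w - u⟫ := by
    rw [inner_add_left, inner_sub_left, inner_add_left, real_inner_smul_left,
      real_inner_smul_left, real_inner_smul_left, sum_inner]
    simp [real_inner_smul_left]
  rw [hG]
  have h1 : ‖w‖ ^ 2 = ‖u‖ ^ 2 + 2 * ⟪u, w - u⟫ + ‖w - u‖ ^ 2 := by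
    rw [← real_inner_self_eq_norm_sq, ← real_inner_self_eq_norm_sq, ← real_inner_self_eq_norm_sq]
    simp only [inner_sub_left, inner_sub_right]
    rw [real_inner_comm u w]
    ring
  have h2 : ‖x₀ - w‖ ^ 2 = ‖x₀ - u‖ ^ 2 + 2 * ⟪u - x₀, w - u⟫ + ‖w - u‖ ^ 2 := by
    rw [← real_inner_self_eq_norm_sq, ← real_inner_self_eq_norm_sq, ← real_inner_self_eq_norm_sq]
    simp only [inner_sub_left, inner_sub_right]
    rw [real_inner_comm u w, real_inner_comm x₀ w, real_inner_comm x₀ u]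
    ring
  have h3 : ⟪d, w⟫ = ⟪d, u⟫ + ⟪d, w - u⟫ := by rw [inner_sub_right]; ring
  rw [h1, h2, h3]
  ring

variable [CompleteSpace E]

theorem quad_hasGradientAt (a c : ℝ) (S : Finset ℕ) (v : ℕ → E) (d : E) (x : E) :
    HasGradientAt (fun u : E => a * (∑ l ∈ S, ⟪v l, u⟫ ^ 2) + c * ‖u‖ ^ 2 - ⟪d, u⟫)
      ((2 * a) • (∑ l ∈ S, ⟪v l, x⟫ • v l) + (2 * c) • x - d) x := by
  rw [hasGradientAt_iff_isLittleO]
  set g := (2 * a) • (∑ l ∈ S, ⟪v l, x⟫ • v l) + (2 * c) • x - d with hg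
  have key : ∀ w : E, (a * (∑ l ∈ S, ⟪v l, w⟫ ^ 2) + c * ‖w‖ ^ 2 - ⟪d, w⟫)
      - (a * (∑ l ∈ S, ⟪v l, x⟫ ^ 2) + c * ‖x‖ ^ 2 - ⟪d, x⟫) - ⟪g, w - x⟫
      = a * (∑ l ∈ S, ⟪v l, w - x⟫ ^ 2) + c * ‖w - x‖ ^ 2 := by
    intro w
    have := quad_expand a c 0 S v d 0 x w
    simp only [zero_mul, add_zero, mul_zero, zero_smul, smul_zero] at this
    rw [hg]
    linarith [this]
  set C := |a| * (∑ l ∈ S, ‖v l‖ ^ 2) + |c| with hC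
  have hC0 : 0 ≤ C := by
    apply add_nonneg _ (abs_nonneg c)
    apply mul_nonneg (abs_nonneg a)
    exact Finset.sum_nonneg fun l _ => sq_nonneg _
  have hbound : ∀ y : E, |a * (∑ l ∈ S, ⟪v l, y⟫ ^ 2) + c * ‖y‖ ^ 2| ≤ C * ‖y‖ ^ 2 := by
    intro y
    have h1 : ∀ l ∈ S, ⟪v l, y⟫ ^ 2 ≤ ‖v l‖ ^ 2 * ‖y‖ ^ 2 := by
      intro l _
      have := abs_real_inner_le_norm (v l) y
      nlinarith [abs_nonneg (⟪v l, y⟫ : ℝ), le_abs_self (⟪v l, y⟫ : ℝ), neg_abs_le (⟪v l, y⟫ : ℝ)]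
    have h2 : (∑ l ∈ S, ⟪v l, y⟫ ^ 2) ≤ (∑ l ∈ S, ‖v l‖ ^ 2) * ‖y‖ ^ 2 := by
      rw [Finset.sum_mul]; exact Finset.sum_le_sum h1
    have h3 : (0:ℝ) ≤ ∑ l ∈ S, ⟪v l, y⟫ ^ 2 := Finset.sum_nonneg fun l _ => sq_nonneg _
    calc |a * (∑ l ∈ S, ⟪v l, y⟫ ^ 2) + c * ‖y‖ ^ 2|
        ≤ |a| * (∑ l ∈ S, ⟪v l, y⟫ ^ 2) + |c| * ‖y‖ ^ 2 := by
          calc _ ≤ |a * (∑ l ∈ S, ⟪v l, y⟫ ^ 2)| + |c * ‖y‖ ^ 2| := abs_add_le _ _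
          _ = |a| * |∑ l ∈ S, ⟪v l, y⟫ ^ 2| + |c| * |‖y‖ ^ 2| := by rw [abs_mul, abs_mul]
          _ = |a| * (∑ l ∈ S, ⟪v l, y⟫ ^ 2) + |c| * ‖y‖ ^ 2 := by
              rw [abs_of_nonneg h3, abs_of_nonneg (sq_nonneg ‖y‖)]
      _ ≤ |a| * ((∑ l ∈ S, ‖v l‖ ^ 2) * ‖y‖ ^ 2) + |c| * ‖y‖ ^ 2 := by
          have := mul_le_mul_of_nonneg_left h2 (abs_nonneg a)
          linarith
      _ = C * ‖y‖ ^ 2 := by rw [hC]; ring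
  rw [Asymptotics.isLittleO_iff]
  intro ε hε
  have hδ : (0:ℝ) < ε / (C + 1) := by positivity
  filter_upwards [Metric.ball_mem_nhds x hδ] with w hw
  rw [Metric.mem_ball, dist_eq_norm] at hw
  rw [key w, Real.norm_eq_abs]
  calc |a * (∑ l ∈ S, ⟪v l, w - x⟫ ^ 2) + c * ‖w - x‖ ^ 2| ≤ C * ‖w - x‖ ^ 2 := hbound _
    _ ≤ ε * ‖w - x‖ := by
        have h0 : (0:ℝ) ≤ ‖w - x‖ := norm_nonneg _
        have : C * ‖w - x‖ ≤ ε := by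
          have : C * ‖w - x‖ ≤ C * (ε / (C + 1)) :=
            mul_le_mul_of_nonneg_left (le_of_lt hw) hC0
          have h2 : C * (ε / (C + 1)) ≤ ε := by
            rw [mul_div_assoc']
            rw [div_le_iff₀ (by linarith)]
            nlinarith
          exact le_trans this h2
        nlinarith [mul_le_mul_of_nonneg_right this h0]

theorem solve_in_subspace [FiniteDimensional ℝ E] (a c : ℝ) (ha : 0 ≤ a) (hc : 0 < c) (S : Finset ℕ)
    (v : ℕ → E) (F : Submodule ℝ E)
    (hmap : ∀ u ∈ F, (a • (∑ l ∈ S, ⟪v l, u⟫ • v l) + c • u) ∈ F)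
    (y : E) (hy : y ∈ F) :
    ∃ u ∈ F, a • (∑ l ∈ S, ⟪v l, u⟫ • v l) + c • u = y := by
  set A : E →ₗ[ℝ] E :=
    a • (∑ l ∈ S, ((innerSL ℝ (v l)).toLinearMap.smulRight (v l))) + c • LinearMap.id with hA
  have hAapp : ∀ u : E, A u = a • (∑ l ∈ S, ⟪v l, u⟫ • v l) + c • u := by
    intro u
    simp [hA, LinearMap.sum_apply, Finset.smul_sum]
  have hmap' : ∀ u ∈ F, A u ∈ F := by
    intro u hu; rw [hAapp]; exact hmap u hu
  have hinj : Function.Injective (A.restrict hmap') := by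
    rw [← LinearMap.ker_eq_bot, LinearMap.ker_eq_bot']
    intro z hz
    have hz0 : A (z : E) = 0 := by
      have := congrArg (Subtype.val) hz
      simpa [LinearMap.restrict_apply] using this
    have hinner : ⟪A (z : E), (z : E)⟫ = a * (∑ l ∈ S, ⟪v l, (z : E)⟫ ^ 2) + c * ‖(z : E)‖ ^ 2 := by
      rw [hAapp, inner_add_left, real_inner_smul_left, real_inner_smul_left, sum_inner,
        real_inner_self_eq_norm_sq]
      congr 1
      rw [mul_eq_mul_left_iff]
      left
      apply Finset.sum_congr rfl
      intro l _
      rw [real_inner_smul_left]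
      ring
    rw [hz0, inner_zero_left] at hinner
    have h1 : (0:ℝ) ≤ ∑ l ∈ S, ⟪v l, (z : E)⟫ ^ 2 := Finset.sum_nonneg fun l _ => sq_nonneg _
    have h2 : ‖(z : E)‖ ^ 2 ≤ 0 := by nlinarith
    have h3 : (z : E) = 0 := by
      have h4 := sq_nonneg ‖(z : E)‖
      have : ‖(z : E)‖ ^ 2 = 0 := le_antisymm h2 h4
      simpa [pow_eq_zero_iff] using this
    exact Subtype.ext h3
  have hsurj : Function.Surjective (A.restrict hmap') :=
    (LinearMap.injective_iff_surjective).mp hinj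
  obtain ⟨u', hu'⟩ := hsurj ⟨y, hy⟩
  refine ⟨(u' : E), u'.2, ?_⟩
  have := congrArg Subtype.val hu'
  rw [LinearMap.restrict_apply] at this
  rw [← hAapp]
  exact this

end Quad

set_option maxHeartbeats 1000000 in
theorem decomposition_quadratic_zero_chain
    (n m : ℕ) (hn : 2 ≤ n) (hm : 2 ≤ m)
    (ω ζ c₁ c₃ : ℝ) (hc₁ : 0 ≤ c₁) (hω : ω = 0)
    (b : ℕ → EuclideanSpace ℝ (Fin m))
    (hb0 : b 0 = ω • EuclideanSpace.single (⟨0, by omega⟩ : Fin m) 1)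
    (hbl : ∀ (l : ℕ) (_h1 : 1 ≤ l) (_h2 : l ≤ m - 1),
      b l = EuclideanSpace.single (⟨l - 1, by omega⟩ : Fin m) 1
            - EuclideanSpace.single (⟨l, by omega⟩ : Fin m) 1)
    (hbm : b m = ζ • EuclideanSpace.single (⟨m - 1, by omega⟩ : Fin m) 1)
    (r : ℕ → EuclideanSpace ℝ (Fin m) → ℝ)
    (hr : ∀ i : ℕ, 1 ≤ i → i ≤ n → ∀ x,
      r i x = (n / 2 : ℝ) *
          (∑ l ∈ (Finset.range (m + 1)).filter (fun l => l % n = (i - 1) % n),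
            ⟪b l, x⟫ ^ 2)
        + (c₁ / 2) * ‖x‖ ^ 2
        - (if i = 1 then c₃ * n * x ⟨0, by omega⟩ else 0))
    (k : ℕ) (hk : k < m) (x : EuclideanSpace ℝ (Fin m)) (hx : x ∈ Fspan m k)
    (γ : ℝ) (hγ : 0 < γ) (i : ℕ) (hi1 : 1 ≤ i) (hin : i ≤ n) :
    (i % n = (k + 1) % n →
      gradient (r i) x ∈ Fspan m (k + 1) ∧
      ∃ u, IsMinOn (fun u => r i u + (1 / (2 * γ)) * ‖x - u‖ ^ 2) Set.univ u ∧
        u ∈ Fspan m (k + 1) ∧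
        ∀ w, IsMinOn (fun u => r i u + (1 / (2 * γ)) * ‖x - u‖ ^ 2) Set.univ w → w = u) ∧
    (¬ i % n = (k + 1) % n →
      gradient (r i) x ∈ Fspan m k ∧
      ∃ u, IsMinOn (fun u => r i u + (1 / (2 * γ)) * ‖x - u‖ ^ 2) Set.univ u ∧
        u ∈ Fspan m k ∧
        ∀ w, IsMinOn (fun u => r i u + (1 / (2 * γ)) * ‖x - u‖ ^ 2) Set.univ w → w = u) := by
  have hb0' : b 0 = 0 := by rw [hb0, hω, zero_smul]
  set S := (Finset.range (m + 1)).filter (fun l => l % n = (i - 1) % n) with hS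
  set d : EuclideanSpace ℝ (Fin m) :=
    if i = 1 then (c₃ * n) • EuclideanSpace.single (⟨0, by omega⟩ : Fin m) 1 else 0 with hd
  -- canonical form of r i
  have hri : r i = fun u : EuclideanSpace ℝ (Fin m) =>
      ((n:ℝ)/2) * (∑ l ∈ S, ⟪b l, u⟫ ^ 2) + (c₁/2) * ‖u‖ ^ 2 - ⟪d, u⟫ := by
    funext u
    rw [hr i hi1 hin u]
    congr 1
    rw [hd]
    by_cases h1 : i = 1
    · simp only [h1, if_true, real_inner_smul_left, inner_single_left']
      try ring
    · simp [h1]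
  -- gradient
  have hgrad := quad_hasGradientAt ((n:ℝ)/2) (c₁/2) S b d x
  rw [← hri] at hgrad
  have hgx : gradient (r i) x = (2 * ((n:ℝ)/2)) • (∑ l ∈ S, ⟪b l, x⟫ • b l)
      + (2 * (c₁/2)) • x - d := hgrad.gradient
  have hxZ : x ∈ Zsub m k := by rw [← Fspan_eq_Zsub]; exact hx
  -- generic membership of the gradient-type vector
  have hGmem : ∀ (K T : ℕ), K ≤ m → K ≤ T → (∀ l ∈ S, l = K → K < T) → d ∈ Zsub m T →
      ∀ u ∈ Zsub m K, (2 * ((n:ℝ)/2)) • (∑ l ∈ S, ⟪b l, u⟫ • b l)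
        + (2 * (c₁/2)) • u - d ∈ Zsub m T := by
    intro K T hKm hKT hlcond hdT u hu
    refine Submodule.sub_mem _ (Submodule.add_mem _ ?_ ?_) hdT
    · apply Submodule.smul_mem
      apply Submodule.sum_mem
      intro l hl
      have hlm : l ≤ m := by
        rw [hS, Finset.mem_filter, Finset.mem_range] at hl
        omega
      exact bterm_mem m hm ζ b hb0' hbl hbm K T l hKm hlm hKT (hlcond l hl) u hu
    · exact Submodule.smul_mem _ _ (Zsub_le m K T hKT hu)
  -- mod-arithmetic facts
  have hmod_iff : ∀ l, l % n = (i - 1) % n → (l + 1) % n = i % n := by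
    intro l h
    have h' : (l + 1) % n = (i - 1 + 1) % n := Nat.ModEq.add_right 1 h
    rwa [Nat.sub_add_cancel hi1] at h'
  -- the expansion of the prox objective
  have hQexp : ∀ u w : EuclideanSpace ℝ (Fin m),
      r i w + (1 / (2 * γ)) * ‖x - w‖ ^ 2
      = (r i u + (1 / (2 * γ)) * ‖x - u‖ ^ 2)
        + ⟪(2 * ((n:ℝ)/2)) • (∑ l ∈ S, ⟪b l, u⟫ • b l) + (2 * (c₁/2)) • u - d
            + (2 * (1 / (2 * γ))) • (u - x), w - u⟫
        + (((n:ℝ)/2) * (∑ l ∈ S, ⟪b l, w - u⟫ ^ 2)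
            + (c₁/2 + 1 / (2 * γ)) * ‖w - u‖ ^ 2) := by
    intro u w
    have := quad_expand ((n:ℝ)/2) (c₁/2) (1 / (2 * γ)) S b d x u w
    rw [hri]
    linarith [this]
  -- main generic branch
  have main : ∀ T : ℕ, k ≤ T → T ≤ m → (∀ l ∈ S, l = k → k < T) → (∀ l ∈ S, l ≠ T) →
      d ∈ Zsub m T →
      gradient (r i) x ∈ Zsub m T ∧
      ∃ u, IsMinOn (fun u => r i u + (1 / (2 * γ)) * ‖x - u‖ ^ 2) Set.univ u ∧
        u ∈ Zsub m T ∧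
        ∀ w, IsMinOn (fun u => r i u + (1 / (2 * γ)) * ‖x - u‖ ^ 2) Set.univ w → w = u := by
    intro T hkT hTm hlcond hlneT hdT
    constructor
    · rw [hgx]
      exact hGmem k T (le_of_lt hk) hkT hlcond hdT x hxZ
    · -- solve the prox equation in Zsub m T
      have hsolve := solve_in_subspace (E := EuclideanSpace ℝ (Fin m))
        (2 * ((n:ℝ)/2)) (2 * (c₁/2) + 2 * (1 / (2 * γ)))
        (by positivity) (by positivity) S b (Zsub m T)
        (by
          intro u hu
          have h1 : (2 * ((n:ℝ)/2)) • (∑ l ∈ S, ⟪b l, u⟫ • b l) ∈ Zsub m T := by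
            apply Submodule.smul_mem
            apply Submodule.sum_mem
            intro l hl
            have hlm : l ≤ m := by
              rw [hS, Finset.mem_filter, Finset.mem_range] at hl
              omega
            exact bterm_mem m hm ζ b hb0' hbl hbm T T l hTm hlm le_rfl
              (fun h => absurd h (hlneT l hl)) u hu
          exact Submodule.add_mem _ h1 (Submodule.smul_mem _ _ hu))
        ((2 * (1 / (2 * γ))) • x + d)
        (Submodule.add_mem _ (Submodule.smul_mem _ _ (Zsub_le m k T hkT hxZ)) hdT)
      obtain ⟨u, huT, huEq⟩ := hsolve
      have hGq : (2 * ((n:ℝ)/2)) • (∑ l ∈ S, ⟪b l, u⟫ • b l) + (2 * (c₁/2)) • u - d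
          + (2 * (1 / (2 * γ))) • (u - x) = 0 := by
        have : (2 * ((n:ℝ)/2)) • (∑ l ∈ S, ⟪b l, u⟫ • b l) + (2 * (c₁/2)) • u - d
            + (2 * (1 / (2 * γ))) • (u - x)
            = ((2 * ((n:ℝ)/2)) • (∑ l ∈ S, ⟪b l, u⟫ • b l)
              + (2 * (c₁/2) + 2 * (1 / (2 * γ))) • u)
              - ((2 * (1 / (2 * γ))) • x + d) := by
          module
        rw [this, huEq, sub_self]
      have hrem : ∀ w : EuclideanSpace ℝ (Fin m),
          (1 / (2 * γ)) * ‖w - u‖ ^ 2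
          ≤ ((n:ℝ)/2) * (∑ l ∈ S, ⟪b l, w - u⟫ ^ 2) + (c₁/2 + 1 / (2 * γ)) * ‖w - u‖ ^ 2 := by
        intro w
        have h1 : (0:ℝ) ≤ ∑ l ∈ S, ⟪b l, w - u⟫ ^ 2 := Finset.sum_nonneg fun l _ => sq_nonneg _
        have h2 : (0:ℝ) ≤ (n:ℝ)/2 := by positivity
        nlinarith [sq_nonneg ‖w - u‖]
      have hminu : IsMinOn (fun u => r i u + (1 / (2 * γ)) * ‖x - u‖ ^ 2) Set.univ u := by
        rw [isMinOn_iff]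
        intro w _
        have := hQexp u w
        rw [hGq, inner_zero_left] at this
        have h3 := hrem w
        have h4 : (0:ℝ) ≤ (1 / (2 * γ)) * ‖w - u‖ ^ 2 := by positivity
        linarith
      refine ⟨u, hminu, huT, ?_⟩
      intro w hw
      have hle : r i w + (1 / (2 * γ)) * ‖x - w‖ ^ 2
          ≤ r i u + (1 / (2 * γ)) * ‖x - u‖ ^ 2 := by
        have := (isMinOn_iff.mp hw) u (Set.mem_univ u)
        exact this
      have := hQexp u w
      rw [hGq, inner_zero_left] at this
      have h3 := hrem w
      have h5 : (1 / (2 * γ)) * ‖w - u‖ ^ 2 ≤ 0 := by linarith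
      have h6 : ‖w - u‖ ^ 2 ≤ 0 := by
        have hpos : (0:ℝ) < 1 / (2 * γ) := by positivity
        nlinarith
      have h7 : ‖w - u‖ = 0 := by
        have := sq_nonneg ‖w - u‖
        have h8 : ‖w - u‖ ^ 2 = 0 := le_antisymm h6 this
        simpa [pow_eq_zero_iff] using h8
      have := norm_eq_zero.mp h7
      exact sub_eq_zero.mp this
  constructor
  · -- matching case : T = k+1
    intro hmod
    have hlneT : ∀ l ∈ S, l ≠ k + 1 := by
      intro l hl hlk
      rw [hS, Finset.mem_filter] at hl
      have h1 := hmod_iff l hl.2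
      rw [hlk] at h1
      -- (k+2) % n = i % n and i % n = (k+1) % n
      have h2 : (k + 2) % n = (k + 1) % n := by rw [h1, hmod]
      have h3 : n ∣ (k + 2) - (k + 1) := by
        have := (Nat.modEq_iff_dvd' (by omega : k + 1 ≤ k + 2)).mp h2.symm
        exact this
      simp at h3
      omega
    have hdT : d ∈ Zsub m (k + 1) := by
      rw [hd]
      by_cases h1 : i = 1
      · simp only [h1, if_true]
        exact Submodule.smul_mem _ _ (single_mem_Zsub m (k+1) _ (by simp))
      · simp only [h1, if_false]
        exact Submodule.zero_mem _
    have := main (k+1) (by omega) (by omega) (fun l _ _ => by omega) hlneT hdT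
    rw [Fspan_eq_Zsub]
    exact this
  · -- non-matching case : T = k
    intro hmod
    have hlnek : ∀ l ∈ S, l ≠ k := by
      intro l hl hlk
      rw [hS, Finset.mem_filter] at hl
      have h1 := hmod_iff l hl.2
      rw [hlk] at h1
      exact hmod h1.symm
    have hdT : d ∈ Zsub m k := by
      have hk1 : i = 1 → 1 ≤ k := by
        intro h1
        by_contra hcon
        have hk0 : k = 0 := by omega
        apply hmod
        rw [h1, hk0]
      rw [hd]
      by_cases h1 : i = 1
      · simp only [h1, if_true]
        exact Submodule.smul_mem _ _ (single_mem_Zsub m k _ (by have := hk1 h1; simp; omega))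
      · simp only [h1, if_false]
        exact Submodule.zero_mem _
    have := main k le_rfl (by omega) (fun l hl hlk => absurd hlk (hlnek l hl)) hlnek hdT
    rw [Fspan_eq_Zsub]
    exact this
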